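/- Restricted eigenvalue bound for the damped preconditioner: let A be a real m×d matrix, λ > 0, P := A·(Aᵀ·A + λ·I)⁻¹·Aᵀ (the matrix Aᵀ·A + λ·I being invertible since λ > 0), and s ≥ 0. If v ∈ ℝ^m belongs to the sum of the eigenspaces of the linear endomorphism w ↦ (A·Aᵀ)·w of ℝ^m associated with eigenvalues μ ≥ s, then ‖v − P·v‖₂ ≤ (λ/(s + λ))·‖v‖₂. -/

import Mathlib

open Matrix

private lemma damped_aux_posdef {m d : ℕ} (A : Matrix (Fin m) (Fin d) ℝ) {lam : ℝ}
    (hlam : 0 < lam) :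
    (Aᵀ * A + lam • (1 : Matrix (Fin d) (Fin d) ℝ)).PosDef := by
  refine Matrix.PosDef.of_dotProduct_mulVec_pos ?_ ?_
  · exact (Matrix.conjTranspose_eq_transpose_of_trivial A ▸
      Matrix.isHermitian_conjTranspose_mul_self A).add
      (by simp [Matrix.IsHermitian])
  · intro x hx
    have h1 : (0:ℝ) ≤ star x ⬝ᵥ ((Aᵀ * A) *ᵥ x) := by
      have := (Matrix.posSemidef_conjTranspose_mul_self A).dotProduct_mulVec_nonneg (x := x)
      simpa [Matrix.conjTranspose_eq_transpose_of_trivial] using this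
    have h2 : (0:ℝ) < star x ⬝ᵥ x := Matrix.dotProduct_star_self_pos_iff.mpr hx
    have : star x ⬝ᵥ ((Aᵀ * A + lam • (1 : Matrix (Fin d) (Fin d) ℝ)) *ᵥ x)
        = star x ⬝ᵥ ((Aᵀ * A) *ᵥ x) + lam * (star x ⬝ᵥ x) := by
      simp [Matrix.add_mulVec, Matrix.smul_mulVec, dotProduct_add,
        dotProduct_smul, smul_eq_mul]
    rw [this]
    have := mul_pos hlam h2
    linarith

private lemma damped_key {m d : ℕ} (A : Matrix (Fin m) (Fin d) ℝ) {lam μ : ℝ}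
    (hlam : 0 < lam) (hμ : μ + lam ≠ 0) (x : Fin m → ℝ)
    (hx : (A * Aᵀ) *ᵥ x = μ • x) :
    (A * (Aᵀ * A + lam • (1 : Matrix (Fin d) (Fin d) ℝ))⁻¹ * Aᵀ) *ᵥ x
      = (μ / (μ + lam)) • x := by
  set M := Aᵀ * A + lam • (1 : Matrix (Fin d) (Fin d) ℝ) with hM
  have hMpd : M.PosDef := damped_aux_posdef A hlam
  have hdet : IsUnit M.det := isUnit_iff_ne_zero.mpr hMpd.det_pos.ne' 
  have h1 : M *ᵥ (Aᵀ *ᵥ x) = (μ + lam) • (Aᵀ *ᵥ x) := by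
    have : (Aᵀ * A) *ᵥ (Aᵀ *ᵥ x) = μ • (Aᵀ *ᵥ x) := by
      rw [← Matrix.mulVec_mulVec, Matrix.mulVec_mulVec x A Aᵀ, hx, Matrix.mulVec_smul]
    rw [hM, Matrix.add_mulVec, this, Matrix.smul_mulVec, Matrix.one_mulVec, add_smul]
  have h2 : M⁻¹ *ᵥ (Aᵀ *ᵥ x) = (μ + lam)⁻¹ • (Aᵀ *ᵥ x) := by
    have h3 : (μ + lam) • (M⁻¹ *ᵥ (Aᵀ *ᵥ x)) = Aᵀ *ᵥ x := by
      rw [← Matrix.mulVec_smul, ← h1, Matrix.mulVec_mulVec,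
        Matrix.nonsing_inv_mul M hdet, Matrix.one_mulVec]
    calc M⁻¹ *ᵥ (Aᵀ *ᵥ x)
        = (μ + lam)⁻¹ • ((μ + lam) • (M⁻¹ *ᵥ (Aᵀ *ᵥ x))) := by
          rw [smul_smul, inv_mul_cancel₀ hμ, one_smul]
      _ = (μ + lam)⁻¹ • (Aᵀ *ᵥ x) := by rw [h3]
  calc (A * M⁻¹ * Aᵀ) *ᵥ x = A *ᵥ (M⁻¹ *ᵥ (Aᵀ *ᵥ x)) := by
        rw [Matrix.mulVec_mulVec, Matrix.mulVec_mulVec]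
    _ = (μ + lam)⁻¹ • (A *ᵥ (Aᵀ *ᵥ x)) := by rw [h2, Matrix.mulVec_smul]
    _ = (μ + lam)⁻¹ • ((A * Aᵀ) *ᵥ x) := by rw [Matrix.mulVec_mulVec]
    _ = (μ / (μ + lam)) • x := by rw [hx, smul_smul, div_eq_mul_inv, mul_comm]

open RealInnerProductSpace in
/-- Restricted eigenvalue bound for the damped preconditioner: on the sum of the eigenspaces
of `A·Aᵀ` with eigenvalue at least `s`, the operator `I − A·(Aᵀ·A + λ·I)⁻¹·Aᵀ` contracts by a
factor `λ/(s + λ)`. -/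
theorem damped_preconditioner_restricted_eigenvalue {m d : ℕ}
    (A : Matrix (Fin m) (Fin d) ℝ) (lam s : ℝ) (hlam : 0 < lam) (hs : 0 ≤ s)
    (v : EuclideanSpace ℝ (Fin m))
    (hv : v ∈ ⨆ μ ∈ {μ : ℝ | s ≤ μ},
        Module.End.eigenspace (Matrix.toEuclideanLin (A * Aᵀ)) μ) :
    ‖v - Matrix.toEuclideanLin
        (A * (Aᵀ * A + lam • (1 : Matrix (Fin d) (Fin d) ℝ))⁻¹ * Aᵀ) v‖ ≤
      lam / (s + lam) * ‖v‖ := by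
  set T := Matrix.toEuclideanLin (A * Aᵀ) with hTdef
  set Q := Matrix.toEuclideanLin
      (A * (Aᵀ * A + lam • (1 : Matrix (Fin d) (Fin d) ℝ))⁻¹ * Aᵀ) with hQdef
  have hT : T.IsSymmetric := by
    rw [hTdef, ← Matrix.isHermitian_iff_isSymmetric]
    simpa [Matrix.conjTranspose_eq_transpose_of_trivial] using
      Matrix.isHermitian_mul_conjTranspose_self A
  have hn : Module.finrank ℝ (EuclideanSpace ℝ (Fin m)) = m := finrank_euclideanSpace_fin
  set b := hT.eigenvectorBasis hn with hb
  set μ : Fin m → ℝ := fun i => hT.eigenvalues hn i with hμdef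
  have heig : ∀ i, T (b i) = μ i • b i := fun i =>
    Module.End.mem_eigenspace_iff.mp (hT.hasEigenvector_eigenvectorBasis hn i).1
  set c : Fin m → ℝ := fun i => ⟪b i, v⟫ with hc
  -- coefficients below the threshold vanish
  have h0 : ∀ i, μ i < s → c i = 0 := by
    intro i hi
    have hle : (⨆ ν ∈ {ν : ℝ | s ≤ ν}, Module.End.eigenspace T ν)
        ≤ (Submodule.span ℝ {b i})ᗮ := by
      refine iSup₂_le fun ν hν w hw => ?_
      rw [Submodule.mem_orthogonal]
      intro u hu
      obtain ⟨r, rfl⟩ := Submodule.mem_span_singleton.mp hu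
      have hw' : T w = ν • w := Module.End.mem_eigenspace_iff.mp hw
      have hsym := hT (b i) w
      rw [heig i, hw', real_inner_smul_left, real_inner_smul_right] at hsym
      have hinner : ⟪b i, w⟫ = 0 := by
        have hne : μ i ≠ ν := ne_of_lt (lt_of_lt_of_le hi hν)
        by_contra hzero
        exact hne (mul_right_cancel₀ hzero hsym)
      rw [real_inner_smul_left, hinner, mul_zero]
    have := Submodule.mem_orthogonal_singleton_iff_inner_right.mp (hle hv)
    simpa [hc] using this
  -- the action of Q on eigenvectors above the threshold
  have hQb : ∀ i, s ≤ μ i → Q (b i) = (μ i / (μ i + lam)) • b i := by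
    intro i hi
    have hμlam : μ i + lam ≠ 0 := ne_of_gt (by linarith)
    have hx : (A * Aᵀ) *ᵥ (WithLp.equiv 2 (Fin m → ℝ) (b i))
        = μ i • (WithLp.equiv 2 (Fin m → ℝ) (b i)) := by
      have := congrArg (WithLp.equiv 2 (Fin m → ℝ)) (heig i)
      exact this
    have := damped_key A hlam hμlam _ hx
    rw [hQdef, Matrix.toEuclideanLin_apply, ← WithLp.equiv_apply, this]
    simp
  -- expand v - Q v in the eigenbasis
  have hvrepr : v = ∑ i, c i • b i := (b.sum_repr' v).symm
  have hexp : v - Q v = ∑ i, (c i * (lam / (μ i + lam))) • b i := by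
    conv_lhs => rw [hvrepr]
    rw [map_sum]
    rw [← Finset.sum_sub_distrib]
    refine Finset.sum_congr rfl fun i _ => ?_
    rcases lt_or_ge (μ i) s with hi | hi
    · simp [h0 i hi]
    · rw [LinearMap.map_smul, hQb i hi, smul_smul, ← sub_smul]
      congr 1
      have hμlam : μ i + lam ≠ 0 := ne_of_gt (by linarith)
      field_simp
      ring
  -- Parseval-type computations
  have hnorm : ∀ l : Fin m → ℝ, ‖∑ i, l i • b i‖ ^ 2 = ∑ i, l i ^ 2 := by
    intro l
    rw [← real_inner_self_eq_norm_sq, b.orthonormal.inner_sum l l]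
    simp [sq]
  have hvnorm : ‖v‖ ^ 2 = ∑ i, c i ^ 2 := by rw [hvrepr]; exact hnorm c
  have hwnorm : ‖v - Q v‖ ^ 2 = ∑ i, (c i * (lam / (μ i + lam))) ^ 2 := by
    rw [hexp]; exact hnorm _
  have hfac : 0 ≤ lam / (s + lam) := by positivity
  have hsq : ‖v - Q v‖ ^ 2 ≤ (lam / (s + lam) * ‖v‖) ^ 2 := by
    rw [hwnorm, mul_pow, hvnorm, Finset.mul_sum]
    refine Finset.sum_le_sum fun i _ => ?_
    rcases lt_or_ge (μ i) s with hi | hi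
    · simp [h0 i hi]
    · have hμlam : (0:ℝ) < μ i + lam := by linarith
      have hslam : (0:ℝ) < s + lam := by positivity
      have hdiv : lam / (μ i + lam) ≤ lam / (s + lam) :=
        div_le_div_of_nonneg_left hlam.le hslam (by linarith)
      have hdiv0 : 0 ≤ lam / (μ i + lam) := by positivity
      calc (c i * (lam / (μ i + lam))) ^ 2
          = (lam / (μ i + lam)) ^ 2 * c i ^ 2 := by ring
        _ ≤ (lam / (s + lam)) ^ 2 * c i ^ 2 := by
            apply mul_le_mul_of_nonneg_right _ (sq_nonneg _)
            exact pow_le_pow_left₀ hdiv0 hdiv 2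
  have h1 : 0 ≤ lam / (s + lam) * ‖v‖ := mul_nonneg hfac (norm_nonneg v)
  calc ‖v - Q v‖ = Real.sqrt (‖v - Q v‖ ^ 2) := by rw [Real.sqrt_sq (norm_nonneg _)]
    _ ≤ Real.sqrt ((lam / (s + lam) * ‖v‖) ^ 2) := Real.sqrt_le_sqrt hsq
    _ = lam / (s + lam) * ‖v‖ := Real.sqrt_sq h1
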